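/- arXiv:1503.05397 — 3 statements merged into one kernel-verified Lean document; each statement's English description precedes it below -/
import Mathlib

section
/- Let X be a metric space, let m be a σ-algebra on X containing the Borel σ-algebra, and let μ be a measure on (X, m) that is finite on bounded m-measurable sets. Suppose μ is regular in the sense that for every m-measurable set A there exists a Borel set B ⊇ A with μ(A) = μ(B). Let 1 ≤ p < ∞ and η ∈ (0,1]. Then the Hölder continuous functions of exponent η with bounded support are dense in L^p(μ): for every f ∈ L^p(μ) and ε > 0 there is g : X → ℝ with bounded support and |g(x) − g(y)| ≤ C · d(x,y)^η for some C and all x, y, such that ‖f − g‖_{L^p(μ)} < ε. -/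
open MeasureTheory Bornology Set Metric Filter Topology ENNReal

private lemma holder_of_lip {X : Type*} [MetricSpace X] {g : X → ℝ} {L M η : ℝ}
    (hη₀ : 0 < η) (hη₁ : η ≤ 1) (hL : 0 ≤ L) (hM : 0 ≤ M)
    (hlip : ∀ x y, |g x - g y| ≤ L * dist x y) (hbd : ∀ x, |g x| ≤ M) :
    ∀ x y, |g x - g y| ≤ (L + 2 * M) * dist x y ^ η := by
  intro x y
  have hdnn : (0:ℝ) ≤ dist x y := dist_nonneg
  have hrnn : (0:ℝ) ≤ dist x y ^ η := Real.rpow_nonneg hdnn η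
  rcases eq_or_lt_of_le hdnn with hd | hd
  · have hxy : x = y := dist_eq_zero.1 hd.symm
    subst hxy
    simp only [sub_self, abs_zero]
    positivity
  rcases le_or_gt (dist x y) 1 with h1 | h1
  · have hde : dist x y ≤ dist x y ^ η := by
      nth_rewrite 1 [← Real.rpow_one (dist x y)]
      exact Real.rpow_le_rpow_of_exponent_ge hd h1 hη₁
    calc |g x - g y| ≤ L * dist x y := hlip x y
      _ ≤ L * dist x y ^ η := by nlinarith
      _ ≤ (L + 2 * M) * dist x y ^ η := by nlinarith
  · have h1e : (1:ℝ) ≤ dist x y ^ η := by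
      calc (1:ℝ) = 1 ^ η := (Real.one_rpow η).symm
        _ ≤ dist x y ^ η := Real.rpow_le_rpow zero_le_one h1.le hη₀.le
    calc |g x - g y| ≤ |g x| + |g y| := abs_sub _ _
      _ ≤ 2 * M := by have := hbd x; have := hbd y; linarith
      _ ≤ 2 * M * dist x y ^ η := le_mul_of_one_le_right (by linarith) h1e
      _ ≤ (L + 2 * M) * dist x y ^ η := by nlinarith

private lemma continuous_of_holder {X : Type*} [MetricSpace X] {g : X → ℝ} {C η : ℝ}
    (hη₀ : 0 < η) (h : ∀ x y, |g x - g y| ≤ C * dist x y ^ η) : Continuous g := by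
  rw [continuous_iff_continuousAt]
  intro x
  rw [ContinuousAt, tendsto_iff_dist_tendsto_zero]
  apply squeeze_zero (fun y => dist_nonneg) (fun y => h y x)
  have h1 : Tendsto (fun y => dist y x) (𝓝 x) (𝓝 0) := by
    have := (continuous_id.dist (continuous_const (y := x))).tendsto x
    simpa using this
  have h2 : Tendsto (fun d : ℝ => C * d ^ η) (𝓝 0) (𝓝 0) := by
    have hc : ContinuousAt (fun d : ℝ => d ^ η) 0 :=
      Real.continuousAt_rpow_const 0 η (Or.inr hη₀.le)
    have := (hc.tendsto).const_mul C
    simpa [Real.zero_rpow hη₀.ne'] using this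
  exact h2.comp h1

private lemma regularity_helper' {Y : Type*} [MetricSpace Y] [MeasurableSpace Y] [BorelSpace Y]
    (ν : Measure Y) (hν : ∀ A : Set Y, MeasurableSet A → IsBounded A → ν A < ⊤)
    {B : Set Y} (hB : MeasurableSet B) (hBb : IsBounded B)
    {δ : ℝ≥0∞} (hδ : δ ≠ 0) :
    ∃ F U : Set Y, IsClosed F ∧ IsOpen U ∧ F ⊆ B ∧ B ⊆ U ∧ IsBounded U ∧ ν (U \ F) < δ := by
  rcases B.eq_empty_or_nonempty with rfl | ⟨x0, hx0⟩
  · exact ⟨∅, ∅, isClosed_empty, isOpen_empty, Subset.rfl, Subset.rfl, isBounded_empty,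
      by simpa [pos_iff_ne_zero] using hδ⟩
  obtain ⟨r, hr⟩ := hBb.subset_closedBall x0
  set D := ball x0 (r + 2) with hD
  set ν' := ν.restrict D with hν'
  haveI : IsFiniteMeasure ν' := ⟨by
    rw [hν', Measure.restrict_apply_univ]
    exact hν D measurableSet_ball isBounded_ball⟩
  have hBfin : ν' B ≠ ⊤ := (measure_lt_top ν' B).ne
  have hhalf : (δ / 2) ≠ 0 := (ENNReal.half_pos hδ).ne'
  obtain ⟨U0, hBU0, hU0o, hU0⟩ := Set.exists_isOpen_lt_of_lt B (ν' B + δ / 2)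
    (ENNReal.lt_add_right hBfin hhalf)
  obtain ⟨F, hFB, hFc, hF⟩ := hB.exists_isClosed_lt_add hBfin hhalf
  have hrr : (0:ℝ) ≤ r := by
    have := hr hx0; simp only [mem_closedBall] at this
    have := dist_nonneg (x := x0) (y := x0); linarith [mem_closedBall.1 (hr hx0), dist_nonneg (x := x0) (y := x0)]
  refine ⟨F, U0 ∩ ball x0 (r + 1), hFc, hU0o.inter isOpen_ball, hFB,
    subset_inter hBU0 (hr.trans (closedBall_subset_ball (by linarith))),
    isBounded_ball.subset inter_subset_right, ?_⟩
  have hsub : (U0 ∩ ball x0 (r + 1)) \ F ⊆ (U0 \ B) ∪ (B \ F) := by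
    intro x hx
    by_cases hxB : x ∈ B
    · exact Or.inr ⟨hxB, hx.2⟩
    · exact Or.inl ⟨hx.1.1, hxB⟩
  have hDsub : (U0 ∩ ball x0 (r + 1)) \ F ⊆ D := fun x hx =>
    ball_subset_ball (by linarith) hx.1.2
  have hmeas : MeasurableSet ((U0 ∩ ball x0 (r + 1)) \ F) :=
    ((hU0o.inter isOpen_ball).measurableSet).diff hFc.measurableSet
  have hre : ν ((U0 ∩ ball x0 (r + 1)) \ F) = ν' ((U0 ∩ ball x0 (r + 1)) \ F) := by
    rw [hν', Measure.restrict_apply hmeas, inter_eq_self_of_subset_left hDsub]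
  rw [hre]
  calc ν' ((U0 ∩ ball x0 (r + 1)) \ F) ≤ ν' (U0 \ B) + ν' (B \ F) :=
        le_trans (measure_mono hsub) (measure_union_le _ _)
    _ < δ / 2 + δ / 2 := ENNReal.add_lt_add
        (measure_diff_lt_of_lt_add hB.nullMeasurableSet hBU0 hBfin hU0)
        (measure_diff_lt_of_lt_add hFc.measurableSet.nullMeasurableSet hFB
          ((measure_lt_top ν' F).ne) hF)
    _ = δ := ENNReal.add_halves δ

private lemma aux_set' {X : Type*} [MetricSpace X] [m : MeasurableSpace X]
    (hm : borel X ≤ m) (μ : Measure X)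
    (hμ : ∀ A : Set X, MeasurableSet A → IsBounded A → μ A < ⊤)
    (hreg : ∀ A : Set X, MeasurableSet A →
      ∃ B : Set X, MeasurableSet[borel X] B ∧ A ⊆ B ∧ μ A = μ B)
    {η : ℝ} (hη₀ : 0 < η) (hη₁ : η ≤ 1)
    {s : Set X} (hs : MeasurableSet s) (hsfin : μ s < ⊤)
    {δ : ℝ≥0∞} (hδ : δ ≠ 0) :
    ∃ (g0 : X → ℝ) (E : Set X), MeasurableSet E ∧ μ E ≤ 3 * δ ∧
      IsBounded {x | g0 x ≠ 0} ∧ (∃ C, ∀ x y, |g0 x - g0 y| ≤ C * dist x y ^ η) ∧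
      ∀ x, |g0 x - s.indicator (fun _ => (1:ℝ)) x| ≤ E.indicator (fun _ => (1:ℝ)) x := by
  haveI : OpensMeasurableSpace X := ⟨hm⟩
  rcases isEmpty_or_nonempty X with hX | hX
  · exact ⟨0, ∅, MeasurableSet.empty, by simp, by simp, ⟨0, fun x y => isEmptyElim x⟩,
      fun x => isEmptyElim x⟩
  obtain ⟨x0⟩ := hX
  -- Step 1 : cut off to a ball
  have h2 : (⋂ n : ℕ, s \ ball x0 n) = ∅ := by
    rw [← Set.diff_iUnion, iUnion_ball_nat, diff_univ]
  have h1 : Tendsto (fun n : ℕ => μ (s \ ball x0 n)) atTop (𝓝 0) := by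
    have := tendsto_measure_iInter_atTop (μ := μ) (s := fun n : ℕ => s \ ball x0 n)
      (fun n => (hs.diff measurableSet_ball).nullMeasurableSet)
      (fun i j hij => diff_subset_diff_right (ball_subset_ball (Nat.cast_le.2 hij)))
      ⟨0, ((measure_mono diff_subset).trans_lt hsfin).ne⟩
    rwa [h2, measure_empty] at this
  obtain ⟨n1, hn1⟩ := (h1.eventually_lt_const (pos_iff_ne_zero.2 hδ)).exists
  set s' := s ∩ ball x0 n1 with hs'def
  have hs' : MeasurableSet s' := hs.inter measurableSet_ball
  have hs'fin : μ s' < ⊤ := (measure_mono inter_subset_left).trans_lt hsfin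
  -- Step 2 : regularity, Borel superset
  obtain ⟨B, hBb, hs'B, hμB⟩ := hreg s' hs'
  set B' := B ∩ ball x0 n1 with hB'def
  have hB'borel : MeasurableSet[borel X] B' :=
    hBb.inter (MeasurableSpace.measurableSet_generateFrom isOpen_ball)
  have hB'm : MeasurableSet B' := hm _ hB'borel
  have hs'B' : s' ⊆ B' := subset_inter hs'B inter_subset_right
  have hB'bdd : IsBounded B' := isBounded_ball.subset inter_subset_right
  have hB'fin : μ B' < ⊤ := hμ _ hB'm hB'bdd
  have hB'eq : μ B' = μ s' := le_antisymm (by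
      calc μ B' ≤ μ B := measure_mono inter_subset_left
        _ = μ s' := hμB.symm) (measure_mono hs'B')
  have hnull : μ (B' \ s') = 0 := by
    rw [measure_diff hs'B' hs'.nullMeasurableSet hs'fin.ne, hB'eq, tsub_self]
  -- Step 3 : inner closed / outer open approximation via the trimmed Borel measure
  have htrim : ∀ A : Set X, MeasurableSet[borel X] A → IsBounded A → μ.trim hm A < ⊤ :=
    fun A hA hAb => by rw [trim_measurableSet_eq hm hA]; exact hμ A (hm _ hA) hAb
  obtain ⟨F, U, hFc, hUo, hFB, hBU, hUbdd, hUF⟩ :=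
    @regularity_helper' X _ (borel X) (@BorelSpace.mk X _ (borel X) rfl) (μ.trim hm) htrim B' hB'borel hB'bdd δ hδ
  have hFborel : MeasurableSet[borel X] F := by
    have := (MeasurableSpace.measurableSet_generateFrom (α := X) hFc.isOpen_compl).compl
    rwa [compl_compl] at this
  have hUFborel : MeasurableSet[borel X] (U \ F) :=
    (MeasurableSpace.measurableSet_generateFrom hUo).diff hFborel
  have hUFμ : μ (U \ F) < δ := by
    rwa [trim_measurableSet_eq hm hUFborel] at hUF
  have hFm : MeasurableSet F := hFc.measurableSet
  have hFfin : μ F ≠ ⊤ := ((measure_mono hFB).trans_lt hB'fin).ne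
  -- Step 4 : a Lipschitz bump between F and a thickening of F
  obtain ⟨g0, T, hTm, hTbdd, hTF, hg001, hg0F, hg0T, hg0C⟩ :
      ∃ (g0 : X → ℝ) (T : Set X), MeasurableSet T ∧ IsBounded T ∧ μ (T \ F) ≤ δ ∧
        (∀ x, 0 ≤ g0 x ∧ g0 x ≤ 1) ∧ (∀ x ∈ F, g0 x = 1) ∧ (∀ x, x ∉ T → g0 x = 0) ∧
        ∃ C, ∀ x y, |g0 x - g0 y| ≤ C * dist x y ^ η := by
    rcases F.eq_empty_or_nonempty with hFe | hFne
    · refine ⟨0, ∅, MeasurableSet.empty, isBounded_empty, by simp, by simp, ?_, by simp,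
        ⟨0, by intro x y; simp [Real.rpow_nonneg]⟩⟩
      intro x hx; rw [hFe] at hx; exact absurd hx (notMem_empty x)
    · have hFbdd : IsBounded F := hB'bdd.subset hFB
      have hthick : ∃ R > (0:ℝ), μ (thickening R F) ≠ ⊤ :=
        ⟨1, one_pos, (hμ _ (isOpen_thickening.measurableSet) hFbdd.thickening).ne⟩
      have htm := tendsto_measure_thickening_of_isClosed hthick hFc
      have hlt : μ F < μ F + δ := ENNReal.lt_add_right hFfin hδ
      obtain ⟨t, htμ, ht0⟩ := ((htm.eventually_lt_const hlt).and self_mem_nhdsWithin).exists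
      refine ⟨fun x => max 0 (1 - infDist x F / t), thickening t F,
        isOpen_thickening.measurableSet, hFbdd.thickening,
        (measure_diff_lt_of_lt_add hFc.nullMeasurableSet (self_subset_thickening ht0 F)
          hFfin htμ).le, ?_, ?_, ?_, ?_⟩
      · intro x
        constructor
        · exact le_max_left _ _
        · apply max_le zero_le_one
          have h1 : 0 ≤ infDist x F / t := div_nonneg infDist_nonneg ht0.le
          linarith
      · intro x hx
        have hz : infDist x F = 0 := infDist_zero_of_mem hx
        simp [hz]
      · intro x hx
        rw [mem_thickening_iff_infDist_lt hFne] at hx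
        push_neg at hx
        have h1 : (1:ℝ) ≤ infDist x F / t := (one_le_div ht0).2 hx
        apply max_eq_left
        linarith
      · refine ⟨1 / t + 2 * 1, holder_of_lip hη₀ hη₁ (by positivity) one_pos.le ?_ ?_⟩
        · intro x y
          have h1 : |(1 - infDist x F / t) - (1 - infDist y F / t)|
              = |infDist x F - infDist y F| / t := by
            have heq : (1 - infDist x F / t) - (1 - infDist y F / t)
                = (infDist y F - infDist x F) / t := by ring
            rw [heq, abs_div, abs_of_pos ht0, abs_sub_comm]
          calc |max 0 (1 - infDist x F / t) - max 0 (1 - infDist y F / t)|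
              ≤ |(1 - infDist x F / t) - (1 - infDist y F / t)| := by
                rw [max_comm 0 (1 - infDist x F / t), max_comm 0 (1 - infDist y F / t)]
                exact abs_max_sub_max_le_abs _ _ _
            _ = |infDist x F - infDist y F| / t := h1
            _ ≤ dist x y / t := by
                have hd : |infDist x F - infDist y F| ≤ dist x y := by
                  rw [abs_sub_le_iff]
                  refine ⟨by linarith [infDist_le_infDist_add_dist (x := x) (y := y) (s := F)], ?_⟩
                  have h2 := infDist_le_infDist_add_dist (x := y) (y := x) (s := F)
                  rw [dist_comm] at h2
                  linarith
                gcongr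
            _ = 1 / t * dist x y := by field_simp
        · intro x
          rw [abs_le]
          constructor
          · have := le_max_left (0:ℝ) (1 - infDist x F / t); linarith
          · apply max_le zero_le_one
            have h1 : 0 ≤ infDist x F / t := div_nonneg infDist_nonneg ht0.le
            linarith
  -- Step 5 : assemble
  refine ⟨g0, (s \ ball x0 n1) ∪ (B' \ s') ∪ ((U \ F) ∪ (T \ F)), ?_, ?_, ?_, hg0C, ?_⟩
  · exact ((hs.diff measurableSet_ball).union (hB'm.diff hs')).union
      (((hm _ hUFborel)).union (hTm.diff hFm))
  · calc μ ((s \ ball x0 n1) ∪ (B' \ s') ∪ ((U \ F) ∪ (T \ F)))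
        ≤ μ ((s \ ball x0 n1) ∪ (B' \ s')) + μ ((U \ F) ∪ (T \ F)) := measure_union_le _ _
      _ ≤ (μ (s \ ball x0 n1) + μ (B' \ s')) + (μ (U \ F) + μ (T \ F)) :=
          add_le_add (measure_union_le _ _) (measure_union_le _ _)
      _ ≤ (δ + 0) + (δ + δ) :=
          add_le_add (add_le_add hn1.le hnull.le) (add_le_add hUFμ.le hTF)
      _ = 3 * δ := by ring
  · apply hTbdd.subset
    intro x hx
    by_contra hxT
    exact hx (hg0T x hxT)
  · intro x
    by_cases hxE : x ∈ (s \ ball x0 n1) ∪ (B' \ s') ∪ ((U \ F) ∪ (T \ F))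
    · rw [Set.indicator_of_mem hxE]
      obtain ⟨h01, h02⟩ := hg001 x
      by_cases hxs : x ∈ s
      · rw [Set.indicator_of_mem hxs]
        rw [abs_le]; constructor <;> linarith
      · rw [Set.indicator_of_notMem hxs]
        rw [abs_le]; constructor <;> linarith
    · rw [Set.indicator_of_notMem hxE]
      simp only [Set.mem_union, not_or, Set.mem_diff, not_and, not_not] at hxE
      obtain ⟨⟨hx1, hx2⟩, hx3, hx4⟩ := hxE
      by_cases hxF : x ∈ F
      · have hxB' : x ∈ B' := hFB hxF
        have hxs' : x ∈ s' := hx2 hxB'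
        have hxs : x ∈ s := hxs'.1
        rw [Set.indicator_of_mem hxs, hg0F x hxF, sub_self, abs_zero]
      · have hxU : x ∉ U := fun h => hxF (hx3 h)
        have hxT : x ∉ T := fun h => hxF (hx4 h)
        rw [hg0T x hxT]
        have hxs : x ∉ s := by
          intro hxs
          have hxb : x ∈ ball x0 n1 := hx1 hxs
          exact hxU (hBU (hs'B' ⟨hxs, hxb⟩))
        rw [Set.indicator_of_notMem hxs, sub_self, abs_zero]

private lemma aux_indicator' {X : Type*} [MetricSpace X] [m : MeasurableSpace X]
    (hm : borel X ≤ m) (μ : Measure X)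
    (hμ : ∀ A : Set X, MeasurableSet A → IsBounded A → μ A < ⊤)
    (hreg : ∀ A : Set X, MeasurableSet A →
      ∃ B : Set X, MeasurableSet[borel X] B ∧ A ⊆ B ∧ μ A = μ B)
    {p : ℝ} (hp : 1 ≤ p)
    {η : ℝ} (hη₀ : 0 < η) (hη₁ : η ≤ 1)
    (c : ℝ) {s : Set X} (hs : MeasurableSet s) (hsfin : μ s < ⊤)
    {ε : ℝ≥0∞} (hε : ε ≠ 0) :
    ∃ g : X → ℝ, eLpNorm (g - s.indicator fun _ => c) (ENNReal.ofReal p) μ ≤ ε ∧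
      (IsBounded {x | g x ≠ 0} ∧ ∃ C, ∀ x y, |g x - g y| ≤ C * dist x y ^ η) := by
  have hp0 : (0:ℝ) < p := lt_of_lt_of_le one_pos hp
  have hq0 : ENNReal.ofReal p ≠ 0 := by
    simp [ENNReal.ofReal_eq_zero, not_le, hp0]
  have hqt : ENNReal.ofReal p ≠ ⊤ := ENNReal.ofReal_ne_top
  have hqr : (ENNReal.ofReal p).toReal = p := ENNReal.toReal_ofReal hp0.le
  rcases eq_or_ne c 0 with rfl | hc
  · refine ⟨0, ?_, by simp, ⟨0, by intro x y; simp [Real.rpow_nonneg]⟩⟩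
    have : ((0:X → ℝ) - s.indicator fun _ => (0:ℝ)) = 0 := by
      ext x; by_cases h : x ∈ s <;> simp [h]
    rw [this, eLpNorm_zero]
    exact zero_le
  -- choose δ
  have hcnn : (‖c‖₊ : ℝ≥0∞) ≠ 0 := by simpa using hc
  have hcnt : (‖c‖₊ : ℝ≥0∞) ≠ ⊤ := ENNReal.coe_ne_top
  set ε' := min ε 1 with hε'def
  have hε'0 : ε' ≠ 0 := by
    simp only [hε'def, ne_eq, min_eq_iff]
    intro h
    rcases h with ⟨h1, -⟩ | ⟨h1, -⟩
    · exact hε h1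
    · exact one_ne_zero h1
  have hε't : ε' ≠ ⊤ := (min_le_right _ _).trans_lt ENNReal.one_lt_top |>.ne
  have hx0 : (ε' / ‖c‖₊) ≠ 0 := by
    simp [ENNReal.div_eq_zero_iff, hε'0, hcnt]
  have hxt : (ε' / ‖c‖₊) ≠ ⊤ := by
    simp [ENNReal.div_eq_top, hε't, hcnn]
  set δ := (ε' / ‖c‖₊) ^ p * (3:ℝ≥0∞)⁻¹ with hδdef
  have hδ0 : δ ≠ 0 := by
    apply mul_ne_zero
    · exact (ENNReal.rpow_pos (pos_iff_ne_zero.2 hx0) hxt).ne'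
    · simp
  obtain ⟨g0, E, hEm, hEμ, hg0supp, ⟨C0, hC0⟩, hle⟩ :=
    aux_set' hm μ hμ hreg hη₀ hη₁ hs hsfin hδ0
  have hEμ' : μ E ≤ (ε' / ‖c‖₊) ^ p := by
    calc μ E ≤ 3 * δ := hEμ
      _ = (ε' / ‖c‖₊) ^ p * (3 * 3⁻¹) := by rw [hδdef]; ring
      _ = (ε' / ‖c‖₊) ^ p := by
          rw [ENNReal.mul_inv_cancel (by norm_num) (by norm_num), mul_one]
  refine ⟨fun x => c * g0 x, ?_, ?_, ⟨|c| * C0, ?_⟩⟩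
  · calc eLpNorm ((fun x => c * g0 x) - s.indicator fun _ => c) (ENNReal.ofReal p) μ
        ≤ eLpNorm (E.indicator fun _ => c) (ENNReal.ofReal p) μ := by
          apply eLpNorm_mono
          intro x
          have h1 : s.indicator (fun _ => c) x = c * s.indicator (fun _ => (1:ℝ)) x := by
            by_cases h : x ∈ s <;> simp [h]
          have h2 : ‖E.indicator (fun _ => c) x‖ = |c| * E.indicator (fun _ => (1:ℝ)) x := by
            by_cases h : x ∈ E <;> simp [h, abs_eq_self]
          calc ‖((fun x => c * g0 x) - s.indicator fun _ => c) x‖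
              = |c| * |g0 x - s.indicator (fun _ => (1:ℝ)) x| := by
                simp only [Pi.sub_apply, h1, ← abs_mul, mul_sub]
                rfl
            _ ≤ |c| * E.indicator (fun _ => (1:ℝ)) x :=
                mul_le_mul_of_nonneg_left (hle x) (abs_nonneg c)
            _ = ‖E.indicator (fun _ => c) x‖ := h2.symm
      _ = ‖c‖₊ * μ E ^ (1 / (ENNReal.ofReal p).toReal) := eLpNorm_indicator_const hEm hq0 hqt
      _ ≤ ‖c‖₊ * ((ε' / ‖c‖₊) ^ p) ^ (1 / p) := by
          rw [hqr]
          exact mul_le_mul_right (ENNReal.rpow_le_rpow hEμ' (by positivity)) _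
      _ = ‖c‖₊ * (ε' / ‖c‖₊) := by
          rw [← ENNReal.rpow_mul, mul_one_div_cancel hp0.ne', ENNReal.rpow_one]
      _ ≤ ε' := ENNReal.mul_div_le
      _ ≤ ε := min_le_left _ _
  · apply hg0supp.subset
    intro x hx
    simp only [Set.mem_setOf_eq] at hx ⊢
    intro h
    exact hx (by rw [h, mul_zero])
  · intro x y
    calc |c * g0 x - c * g0 y| = |c| * |g0 x - g0 y| := by rw [← abs_mul, mul_sub]
      _ ≤ |c| * (C0 * dist x y ^ η) := mul_le_mul_of_nonneg_left (hC0 x y) (abs_nonneg c)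
      _ = |c| * C0 * dist x y ^ η := by ring

/-- Corrected form of Proposition 4.5 of Aimar–Hartzstein. Let `X` be a metric space,
`m` a σ-algebra containing the Borel σ-algebra, and `μ` a measure on `(X, m)` finite on
bounded `m`-measurable sets, regular in the sense that every `m`-measurable set has a
Borel superset of the same measure. Then for `1 ≤ p < ∞` and `η ∈ (0,1]`, Hölder
continuous functions of exponent `η` with bounded support are dense in `L^p(μ)`. -/
theorem holder_boundedSupport_dense_Lp_of_regular
    {X : Type*} [MetricSpace X] [m : MeasurableSpace X]
    (hm : borel X ≤ m)
    (μ : Measure X)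
    (hμ : ∀ A : Set X, MeasurableSet A → IsBounded A → μ A < ⊤)
    (hreg : ∀ A : Set X, MeasurableSet A →
      ∃ B : Set X, MeasurableSet[borel X] B ∧ A ⊆ B ∧ μ A = μ B)
    (p : ℝ) (hp : 1 ≤ p)
    (η : ℝ) (hη₀ : 0 < η) (hη₁ : η ≤ 1)
    (f : X → ℝ) (hf : MemLp f (ENNReal.ofReal p) μ)
    (ε : ℝ) (hε : 0 < ε) :
    ∃ (g : X → ℝ) (C : ℝ),
      IsBounded {x | g x ≠ 0} ∧
      (∀ x y : X, |g x - g y| ≤ C * dist x y ^ η) ∧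
      eLpNorm (fun x => f x - g x) (ENNReal.ofReal p) μ < ENNReal.ofReal ε := by
  haveI : OpensMeasurableSpace X := ⟨hm⟩
  set P : (X → ℝ) → Prop :=
    fun g => IsBounded {x | g x ≠ 0} ∧ ∃ C, ∀ x y, |g x - g y| ≤ C * dist x y ^ η with hP
  have h0P : ∀ (c : ℝ) ⦃s : Set X⦄, MeasurableSet s → μ s < ⊤ →
      ∀ {δ : ℝ≥0∞}, δ ≠ 0 →
      ∃ g : X → ℝ, eLpNorm (g - s.indicator fun _ => c) (ENNReal.ofReal p) μ ≤ δ ∧ P g :=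
    fun c s hs hsfin δ hδ => aux_indicator' hm μ hμ hreg hp hη₀ hη₁ c hs hsfin hδ
  have h1P : ∀ f g : X → ℝ, P f → P g → P (f + g) := by
    rintro f g ⟨hfb, Cf, hCf⟩ ⟨hgb, Cg, hCg⟩
    refine ⟨(hfb.union hgb).subset ?_, ⟨Cf + Cg, ?_⟩⟩
    · intro x hx
      simp only [Set.mem_setOf_eq, Set.mem_union] at hx ⊢
      by_contra hcon
      push_neg at hcon
      exact hx (by simp [Pi.add_apply, hcon.1, hcon.2])
    · intro x y
      calc |(f + g) x - (f + g) y| = |(f x - f y) + (g x - g y)| := by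
            simp only [Pi.add_apply]; ring_nf
        _ ≤ |f x - f y| + |g x - g y| := abs_add_le _ _
        _ ≤ Cf * dist x y ^ η + Cg * dist x y ^ η := add_le_add (hCf x y) (hCg x y)
        _ = (Cf + Cg) * dist x y ^ η := by ring
  have h2P : ∀ g : X → ℝ, P g → AEStronglyMeasurable g μ := by
    rintro g ⟨-, C, hC⟩
    exact (continuous_of_holder hη₀ hC).aestronglyMeasurable
  obtain ⟨g, hg, hPg⟩ := hf.induction_dense ENNReal.ofReal_ne_top P h0P h1P h2P
    (ε := ENNReal.ofReal (ε / 2)) (by simp [ENNReal.ofReal_eq_zero, not_le, half_pos hε])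
  obtain ⟨hgb, C, hC⟩ := hPg
  refine ⟨g, C, hgb, hC, ?_⟩
  calc eLpNorm (fun x => f x - g x) (ENNReal.ofReal p) μ
      = eLpNorm (f - g) (ENNReal.ofReal p) μ := rfl
    _ ≤ ENNReal.ofReal (ε / 2) := hg
    _ < ENNReal.ofReal ε := by
        rw [ENNReal.ofReal_lt_ofReal_iff hε]
        linarith
end

section
/- Let X be a metric space, let m be a σ-algebra on X containing the Borel σ-algebra, and let μ be a measure on (X, m) that is finite on bounded m-measurable sets. Let 1 ≤ p < ∞ and let f ∈ L^p(μ) be such that f has a Borel-measurable representative (i.e., f = g₀ μ-a.e. for some Borel-measurable g₀ : X → ℝ). Then for every ε > 0 there exists a Lipschitz function g : X → ℝ with bounded support such that ‖f − g‖_{L^p(μ)} < ε. -/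
open MeasureTheory Bornology Metric Set Filter
open scoped ENNReal NNReal

section aux

variable {X : Type*} [MetricSpace X] [MeasurableSpace X] [BorelSpace X]

/-- eLpNorm bound for functions dominated by a constant indicator of a small set. -/
lemma aux_norm_le {μ : Measure X} {p : ℝ≥0∞} (hp0 : p ≠ 0) (hptop : p ≠ ∞)
    {c : ℝ} {t : Set X} (ht : MeasurableSet t) {ε₀ : ℝ≥0∞}
    (hμt : μ t ≤ (ε₀ / ‖c‖₊) ^ p.toReal)
    {h : X → ℝ} (hh : ∀ x, ‖h x‖ ≤ ‖t.indicator (fun _ => c) x‖) :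
    eLpNorm h p μ ≤ ε₀ := by
  have hpt : 0 < p.toReal := ENNReal.toReal_pos hp0 hptop
  calc eLpNorm h p μ ≤ eLpNorm (t.indicator fun _ => c) p μ := eLpNorm_mono hh
    _ = ‖c‖₊ * μ t ^ (1 / p.toReal) := eLpNorm_indicator_const ht hp0 hptop
    _ ≤ ‖c‖₊ * (((ε₀ / ‖c‖₊) ^ p.toReal) ^ (1 / p.toReal)) := by
        exact mul_le_mul_right (ENNReal.rpow_le_rpow hμt (by positivity)) _
    _ = ‖c‖₊ * (ε₀ / ‖c‖₊) := by
        rw [← ENNReal.rpow_mul, mul_one_div_cancel hpt.ne', ENNReal.rpow_one]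
    _ ≤ ε₀ := ENNReal.mul_div_le

lemma aux_h0P (μ : Measure X) (hμ : ∀ A : Set X, MeasurableSet A → IsBounded A → μ A < ⊤)
    {p : ℝ≥0∞} (hp1 : 1 ≤ p) (hptop : p ≠ ∞)
    (c : ℝ) {s : Set X} (hs : MeasurableSet s) (hsμ : μ s < ∞)
    {ε : ℝ≥0∞} (hε : ε ≠ 0) :
    ∃ g : X → ℝ, eLpNorm (g - s.indicator fun _ => c) p μ ≤ ε ∧
      ∃ C : ℝ≥0, LipschitzWith C g ∧ IsBounded {x | g x ≠ 0} := by
  have hp0 : p ≠ 0 := (lt_of_lt_of_le zero_lt_one hp1).ne'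
  rcases eq_or_ne c 0 with rfl | hc
  · refine ⟨0, ?_, 0, LipschitzWith.const' 0, by simp⟩
    simp
  cases isEmpty_or_nonempty X with
  | inl hX =>
      refine ⟨0, ?_, 0, LipschitzWith.const' 0, by simp⟩
      have : (0 - s.indicator fun _ : X => c) = 0 := funext fun x => isEmptyElim x
      simp [this]
  | inr hX =>
  obtain ⟨x₀⟩ := hX
  set ε₀ : ℝ≥0∞ := min (ε / 2 / 2) 1 with hε₀def
  have hε₀0 : ε₀ ≠ 0 := by
    simp only [hε₀def, ne_eq, min_eq_iff, not_or]
    have : ε / 2 / 2 ≠ 0 := by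
      simp [ENNReal.div_eq_zero_iff, hε]
    simp [this]
  have hc' : (‖c‖₊ : ℝ≥0∞) ≠ 0 := by
    simpa using hc
  have hc'' : (‖c‖₊ : ℝ≥0∞) ≠ ∞ := ENNReal.coe_ne_top
  set δ : ℝ≥0∞ := (ε₀ / ‖c‖₊) ^ p.toReal with hδdef
  have hδ0 : 0 < δ := by
    apply ENNReal.rpow_pos
    · exact ENNReal.div_pos hε₀0 hc''
    · exact (ENNReal.div_lt_top (by simp [hε₀def]) hc').ne
  -- truncation of s
  have htrunc : Tendsto (fun n : ℕ => μ (s \ ball x₀ n)) atTop (nhds 0) := by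
    have h1 : (⋂ n : ℕ, s \ ball x₀ n) = ∅ := by
      ext x
      simp only [mem_iInter, mem_diff, mem_empty_iff_false, iff_false, not_forall]
      obtain ⟨n, hn⟩ := exists_nat_gt (dist x x₀)
      exact ⟨n, fun h => h.2 (mem_ball.2 hn)⟩
    have := tendsto_measure_iInter_atTop (μ := μ)
      (s := fun n : ℕ => s \ ball x₀ n)
      (fun n => (hs.diff measurableSet_ball).nullMeasurableSet)
      (fun i j hij => diff_subset_diff_right (ball_subset_ball (by exact_mod_cast hij)))
      ⟨0, ((measure_mono diff_subset).trans_lt hsμ).ne⟩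
    rwa [h1, measure_empty] at this
  obtain ⟨n, hn⟩ := (htrunc.eventually_lt_const hδ0).exists
  set s' : Set X := s ∩ ball x₀ n with hs'def
  have hs'meas : MeasurableSet s' := hs.inter measurableSet_ball
  have hs's : s' ⊆ s := inter_subset_left
  set B : Set X := ball x₀ (n + 1) with hBdef
  have hs'B : s' ⊆ B := inter_subset_right.trans (ball_subset_ball (by linarith))
  have hBmeas : MeasurableSet B := measurableSet_ball
  have hBfin : μ B < ∞ := hμ B hBmeas isBounded_ball
  haveI : IsFiniteMeasure (μ.restrict B) :=
    ⟨by rwa [Measure.restrict_apply_univ]⟩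
  obtain ⟨U, hs'U, hUopen, -, hUdiff⟩ :=
    hs'meas.exists_isOpen_diff_lt (μ := μ.restrict B)
      (((measure_mono (subset_univ _)).trans_lt (measure_lt_top _ _)).ne) hδ0.ne'
  set U₂ : Set X := U ∩ B with hU₂def
  have hU₂open : IsOpen U₂ := hUopen.inter isOpen_ball
  have hU₂meas : MeasurableSet U₂ := hU₂open.measurableSet
  have hU₂bdd : IsBounded U₂ := isBounded_ball.subset inter_subset_right
  have hs'U₂ : s' ⊆ U₂ := subset_inter hs'U hs'B
  have hU₂fin : μ U₂ < ∞ := hμ U₂ hU₂meas hU₂bdd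
  have hU₂diff : μ (U₂ \ s') < δ := by
    have h1 : U₂ \ s' ⊆ (U \ s') ∩ B := fun x hx => ⟨⟨hx.1.1, hx.2⟩, hx.1.2⟩
    calc μ (U₂ \ s') ≤ μ ((U \ s') ∩ B) := measure_mono h1
      _ = μ.restrict B (U \ s') := (Measure.restrict_apply (hUopen.measurableSet.diff hs'meas)).symm
      _ < δ := hUdiff
  -- pick g and the set t₁ dominating (g - indicator U₂)
  obtain ⟨g, hgP, t₁, ht₁meas, ht₁μ, ht₁dom⟩ :
      ∃ g : X → ℝ, (∃ C : ℝ≥0, LipschitzWith C g ∧ IsBounded {x | g x ≠ 0}) ∧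
        ∃ t₁ : Set X, MeasurableSet t₁ ∧ μ t₁ < δ ∧
          ∀ x, ‖g x - U₂.indicator (fun _ => c) x‖ ≤ ‖t₁.indicator (fun _ => c) x‖ := by
    rcases eq_empty_or_nonempty U₂ᶜ with hcompl | hcompl
    · -- U₂ = univ, use the constant function c
      have hU₂univ : U₂ = univ := by
        rw [← compl_empty_iff, hcompl]
      refine ⟨fun _ => c, ⟨0, LipschitzWith.const' c, ?_⟩, ∅, MeasurableSet.empty,
        by simpa using hδ0, fun x => ?_⟩
      · exact hU₂bdd.subset (by rw [hU₂univ]; exact subset_univ _)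
      · simp [hU₂univ]
    · -- use min 1 ((k+1)·infDist x U₂ᶜ)
      have hUc_closed : IsClosed U₂ᶜ := hU₂open.isClosed_compl
      set D : ℕ → Set X := fun k => U₂ \ {x | 1 / ((k : ℝ) + 1) ≤ infDist x U₂ᶜ} with hDdef
      have hDmeas : ∀ k, MeasurableSet (D k) := by
        intro k
        exact hU₂meas.diff
          (isClosed_le continuous_const (continuous_infDist_pt _)).measurableSet
      have hDanti : Antitone D := by
        intro i j hij x hx
        refine ⟨hx.1, fun hle => hx.2 ?_⟩
        have h1 : 1 / ((j:ℝ)+1) ≤ 1 / ((i:ℝ)+1) := by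
          apply one_div_le_one_div_of_le (by positivity)
          have : (i:ℝ) ≤ j := Nat.cast_le.2 hij
          linarith
        exact le_trans h1 hle
      have hDempty : (⋂ k, D k) = ∅ := by
        ext x
        simp only [mem_iInter, mem_empty_iff_false, iff_false, not_forall]
        by_cases hxU : x ∈ U₂
        · have hpos : 0 < infDist x U₂ᶜ :=
            (hUc_closed.notMem_iff_infDist_pos hcompl).1 (fun h => h hxU)
          obtain ⟨k, hk⟩ := exists_nat_one_div_lt hpos
          exact ⟨k, fun h => h.2 (le_of_lt hk)⟩
        · exact ⟨0, fun h => hxU h.1⟩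
      have hDto : Tendsto (fun k => μ (D k)) atTop (nhds 0) := by
        have := tendsto_measure_iInter_atTop (μ := μ) (s := D)
          (fun k => (hDmeas k).nullMeasurableSet) hDanti
          ⟨0, ((measure_mono diff_subset).trans_lt hU₂fin).ne⟩
        rwa [hDempty, measure_empty] at this
      obtain ⟨k, hk⟩ := (hDto.eventually_lt_const hδ0).exists
      set g : X → ℝ := fun x => c * min 1 (((k : ℝ) + 1) * infDist x U₂ᶜ) with hgdef
      have hglip : LipschitzWith (‖c‖₊ * max 1 (‖((k : ℝ) + 1)‖₊ * 1)) g := by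
        apply LipschitzWith.comp (lipschitzWith_smul c)
        exact (LipschitzWith.const' 1).min
          ((lipschitzWith_smul ((k : ℝ) + 1)).comp (lipschitz_infDist_pt _))
      have hgsupp : {x | g x ≠ 0} ⊆ U₂ := by
        intro x hx
        by_contra hxU
        apply hx
        have : infDist x U₂ᶜ = 0 := infDist_zero_of_mem hxU
        simp [hgdef, this]
      refine ⟨g, ⟨_, hglip, hU₂bdd.subset hgsupp⟩, D k, hDmeas k, hk, fun x => ?_⟩
      by_cases hxU : x ∈ U₂
      · by_cases hxD : x ∈ D k
        · -- x in U₂ but infDist small: bound by |c|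
          have hm0 : 0 ≤ min 1 (((k : ℝ) + 1) * infDist x U₂ᶜ) :=
            le_min zero_le_one (mul_nonneg (by positivity) infDist_nonneg)
          have hm1 : min 1 (((k : ℝ) + 1) * infDist x U₂ᶜ) ≤ 1 := min_le_left _ _
          rw [indicator_of_mem hxD, indicator_of_mem hxU]
          simp only [hgdef]
          rw [← mul_one c, show c * 1 * min 1 (((k:ℝ)+1) * infDist x U₂ᶜ) - c * 1
              = c * (min 1 (((k:ℝ)+1) * infDist x U₂ᶜ) - 1) by ring]
          rw [norm_mul, mul_one]
          refine mul_le_of_le_one_right (norm_nonneg c) ?_ |>.trans le_rfl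
          rw [Real.norm_eq_abs, abs_le]
          constructor <;> linarith
        · -- x in U₂, infDist large: g x = c
          have hge : 1 / ((k : ℝ) + 1) ≤ infDist x U₂ᶜ := by
            by_contra hlt
            exact hxD ⟨hxU, fun h => hlt h⟩
          have h1 : (1 : ℝ) ≤ ((k : ℝ) + 1) * infDist x U₂ᶜ := by
            rw [div_le_iff₀ (by positivity)] at hge
            linarith [hge]
          have : g x = c := by
            simp [hgdef, min_eq_left h1]
          rw [this, indicator_of_mem hxU]
          simp [norm_nonneg]
      · have hxt : x ∉ D k := fun h => hxU h.1
        have : g x = 0 := by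
          have : infDist x U₂ᶜ = 0 := infDist_zero_of_mem hxU
          simp [hgdef, this]
        rw [this, indicator_of_notMem hxU, indicator_of_notMem hxt]
        simp
  -- combine the three error terms
  refine ⟨g, ?_, hgP⟩
  obtain ⟨C, hglip, hgsupp⟩ := hgP
  have hgmeas : AEStronglyMeasurable g μ :=
    hglip.continuous.stronglyMeasurable.aestronglyMeasurable
  have hindU₂ : AEStronglyMeasurable (U₂.indicator fun _ => c) μ :=
    (stronglyMeasurable_const.indicator hU₂meas).aestronglyMeasurable
  have hinds' : AEStronglyMeasurable (s'.indicator fun _ => c) μ :=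
    (stronglyMeasurable_const.indicator hs'meas).aestronglyMeasurable
  have hinds : AEStronglyMeasurable (s.indicator fun _ => c) μ :=
    (stronglyMeasurable_const.indicator hs).aestronglyMeasurable
  have hsplit : (g - s.indicator fun _ => c)
      = (fun x => g x - U₂.indicator (fun _ => c) x)
        + ((fun x => U₂.indicator (fun _ => c) x - s'.indicator (fun _ => c) x)
          + fun x => s'.indicator (fun _ => c) x - s.indicator (fun _ => c) x) := by
    funext x; simp only [Pi.add_apply, Pi.sub_apply]; ring
  have e1 : eLpNorm (fun x => g x - U₂.indicator (fun _ => c) x) p μ ≤ ε₀ :=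
    aux_norm_le hp0 hptop ht₁meas ht₁μ.le ht₁dom
  have e2 : eLpNorm (fun x => U₂.indicator (fun _ => c) x - s'.indicator (fun _ => c) x) p μ
      ≤ ε₀ := by
    apply aux_norm_le hp0 hptop (hU₂meas.diff hs'meas) hU₂diff.le
    intro x
    by_cases hx' : x ∈ s'
    · rw [indicator_of_mem (hs'U₂ hx') , indicator_of_mem hx']
      simp [indicator]
    · by_cases hxU : x ∈ U₂
      · rw [indicator_of_mem hxU, indicator_of_notMem hx',
          indicator_of_mem (show x ∈ U₂ \ s' from ⟨hxU, hx'⟩)]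
        simp
      · rw [indicator_of_notMem hxU, indicator_of_notMem hx',
          indicator_of_notMem (fun h => hxU h.1)]
        simp
  have e3 : eLpNorm (fun x => s'.indicator (fun _ => c) x - s.indicator (fun _ => c) x) p μ
      ≤ ε₀ := by
    have hss' : s \ s' ⊆ s \ ball x₀ n := fun x hx =>
      ⟨hx.1, fun hb => hx.2 ⟨hx.1, hb⟩⟩
    apply aux_norm_le hp0 hptop (hs.diff hs'meas)
      (le_trans (measure_mono hss') hn.le)
    intro x
    by_cases hx' : x ∈ s'
    · rw [indicator_of_mem hx', indicator_of_mem (hs's hx'),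
        indicator_of_notMem (fun h => h.2 hx')]
      simp
    · by_cases hxs : x ∈ s
      · rw [indicator_of_notMem hx', indicator_of_mem hxs,
          indicator_of_mem (show x ∈ s \ s' from ⟨hxs, hx'⟩)]
        simp
      · rw [indicator_of_notMem hx', indicator_of_notMem hxs,
          indicator_of_notMem (fun h => hxs h.1)]
        simp
  calc eLpNorm (g - s.indicator fun _ => c) p μ
      ≤ eLpNorm (fun x => g x - U₂.indicator (fun _ => c) x) p μ
        + eLpNorm ((fun x => U₂.indicator (fun _ => c) x - s'.indicator (fun _ => c) x)
          + fun x => s'.indicator (fun _ => c) x - s.indicator (fun _ => c) x) p μ := by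
        rw [hsplit]
        exact eLpNorm_add_le (hgmeas.sub hindU₂) ((hindU₂.sub hinds').add (hinds'.sub hinds)) hp1
    _ ≤ ε₀ + (ε₀ + ε₀) := by
        gcongr
        exact le_trans (eLpNorm_add_le (hindU₂.sub hinds') (hinds'.sub hinds) hp1)
          (add_le_add e2 e3)
    _ ≤ ε / 2 / 2 + (ε / 2 / 2 + ε / 2 / 2) := by
        gcongr <;> exact min_le_left _ _
    _ ≤ ε / 2 + (ε / 2 / 2 + ε / 2 / 2) := by
        gcongr
        exact ENNReal.half_le_self
    _ = ε / 2 + ε / 2 := by rw [ENNReal.add_halves]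
    _ = ε := ENNReal.add_halves ε

lemma aux_dense (μ : Measure X) (hμ : ∀ A : Set X, MeasurableSet A → IsBounded A → μ A < ⊤)
    {p : ℝ≥0∞} (hp1 : 1 ≤ p) (hptop : p ≠ ∞) {f : X → ℝ} (hf : MemLp f p μ)
    {ε : ℝ≥0∞} (hε : ε ≠ 0) :
    ∃ g : X → ℝ, eLpNorm (f - g) p μ ≤ ε ∧
      ∃ C : ℝ≥0, LipschitzWith C g ∧ IsBounded {x | g x ≠ 0} := by
  refine hf.induction_dense hptop
    (fun g => ∃ C : ℝ≥0, LipschitzWith C g ∧ IsBounded {x | g x ≠ 0})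
    (fun c s hs hsμ ε hε => aux_h0P μ hμ hp1 hptop c hs hsμ hε) ?_ ?_ hε
  · rintro f g ⟨Cf, hCf, hbf⟩ ⟨Cg, hCg, hbg⟩
    refine ⟨Cf + Cg, hCf.add hCg, (hbf.union hbg).subset fun x hx => ?_⟩
    by_contra hmem
    simp only [mem_union, mem_setOf_eq, not_or, not_not] at hmem
    exact hx (by simp [Pi.add_apply, hmem.1, hmem.2])
  · rintro f ⟨C, hC, -⟩
    exact hC.continuous.stronglyMeasurable.aestronglyMeasurable

end aux

/-- Corrected conclusion of Proposition 4.5 of Aimar–Hartzstein without regularity: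
on a metric space with a σ-algebra `m` containing the Borel sets and a measure `μ`
finite on bounded `m`-measurable sets, every `f ∈ L^p(μ)` (`1 ≤ p < ∞`) that admits a
Borel-measurable representative can be approximated in `L^p` by Lipschitz functions of
bounded support. -/
theorem lipschitz_boundedSupport_approx_of_borelRepresentative
    {X : Type*} [MetricSpace X] [m : MeasurableSpace X]
    (hm : borel X ≤ m)
    (μ : Measure X)
    (hμ : ∀ A : Set X, MeasurableSet A → IsBounded A → μ A < ⊤)
    (p : ℝ) (hp : 1 ≤ p)
    (f : X → ℝ) (hf : MemLp f (ENNReal.ofReal p) μ)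
    (hfBorel : ∃ g₀ : X → ℝ, Measurable[borel X] g₀ ∧ f =ᵐ[μ] g₀)
    (ε : ℝ) (hε : 0 < ε) :
    ∃ (g : X → ℝ) (C : NNReal), LipschitzWith C g ∧
      IsBounded {x | g x ≠ 0} ∧
      eLpNorm (fun x => f x - g x) (ENNReal.ofReal p) μ < ENNReal.ofReal ε := by
  obtain ⟨g₀, hg₀m, hfg₀⟩ := hfBorel
  set p' : ℝ≥0∞ := ENNReal.ofReal p with hp'def
  have hp'1 : 1 ≤ p' := by
    rw [hp'def, ← ENNReal.ofReal_one]
    exact ENNReal.ofReal_le_ofReal hp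
  have hp'top : p' ≠ ∞ := ENNReal.ofReal_ne_top
  haveI hBS : @BorelSpace X _ (borel X) := @BorelSpace.mk X _ (borel X) rfl
  set ν : @Measure X (borel X) := μ.trim hm with hνdef
  have hg₀SM : StronglyMeasurable[borel X] g₀ :=
    Measurable.stronglyMeasurable hg₀m
  have hνμ : ∀ A : Set X, MeasurableSet[borel X] A → ν A = μ A := fun A hA =>
    trim_measurableSet_eq hm hA
  have hνfin : ∀ A : Set X, MeasurableSet[borel X] A → IsBounded A → ν A < ⊤ := by
    intro A hA hAb
    rw [hνμ A hA]
    exact hμ A (hm _ hA) hAb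
  have hfg₀Lp : MemLp g₀ p' μ := hf.ae_eq hfg₀
  have hg₀ν : MemLp g₀ p' ν := by
    refine ⟨hg₀SM.aestronglyMeasurable, ?_⟩
    rw [eLpNorm_trim hm hg₀SM]
    exact hfg₀Lp.2
  have hε2 : (ENNReal.ofReal (ε / 2)) ≠ 0 := by
    simp [ENNReal.ofReal_eq_zero, not_le, half_pos hε]
  obtain ⟨g, hgle, C, hglip, hgsupp⟩ :=
    @aux_dense X _ (borel X) hBS ν hνfin p' hp'1 hp'top g₀ hg₀ν _ hε2
  refine ⟨g, C, hglip, hgsupp, ?_⟩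
  have hgSM : StronglyMeasurable[borel X] g :=
    @Continuous.stronglyMeasurable X ℝ (borel X) _
      (@BorelSpace.opensMeasurable X _ (borel X) hBS) _ _ _ _ hglip.continuous
  have heq : eLpNorm (fun x => f x - g x) p' μ = eLpNorm (g₀ - g) p' μ := by
    apply eLpNorm_congr_ae
    filter_upwards [hfg₀] with x hx
    simp [hx]
  rw [heq, ← eLpNorm_trim hm (hg₀SM.sub hgSM)]
  calc eLpNorm (g₀ - g) p' ν ≤ ENNReal.ofReal (ε / 2) := hgle
    _ < ENNReal.ofReal ε := by
      rw [ENNReal.ofReal_lt_ofReal_iff hε]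
      linarith
end

section
/- Let X be a metric space, let m be a σ-algebra on X containing the Borel σ-algebra, and let μ be a measure on (X, m) that is finite on bounded m-measurable sets. Let 1 ≤ p < ∞ and η ∈ (0,1], and let f ∈ L^p(μ) have a Borel-measurable representative. Then for every ε > 0 there exists g : X → ℝ with bounded support, satisfying |g(x) − g(y)| ≤ C · d(x,y)^η for some constant C and all x, y ∈ X, such that ‖f − g‖_{L^p(μ)} < ε. -/
open MeasureTheory Bornology Metric Set Filter
open scoped NNReal ENNReal Topology

section AuxLemmas

variable {X : Type*} [MetricSpace X]

/-- Hölder bound for a Lipschitz function with bounded support. -/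
lemma holder_of_lipschitz_boundedSupport {g : X → ℝ} {L : ℝ≥0}
    (hg : LipschitzWith L g) (hb : IsBounded {x | g x ≠ 0})
    {η : ℝ} (hη₀ : 0 < η) (hη₁ : η ≤ 1) :
    ∃ C : ℝ, ∀ x y : X, |g x - g y| ≤ C * dist x y ^ η := by
  rcases Set.eq_empty_or_nonempty {x | g x ≠ 0} with he | ⟨x₀, hx₀⟩
  · have hz : ∀ x, g x = 0 := fun x => by
      by_contra h; exact (Set.eq_empty_iff_forall_notMem.1 he x) h
    exact ⟨0, fun x y => by simp [hz]⟩
  · obtain ⟨r, hr⟩ := hb.subset_closedBall x₀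
    have hr0 : 0 ≤ r := by
      have := hr hx₀; rwa [mem_closedBall, dist_self] at this
    set M := |g x₀| + (L : ℝ) * r with hM
    have hM0 : 0 ≤ M := by positivity
    have hgb : ∀ x, |g x| ≤ M := by
      intro x
      by_cases hx : g x = 0
      · rw [hx]; simpa using hM0
      · have hxb : dist x x₀ ≤ r := by
          have := hr hx; rwa [mem_closedBall] at this
        have h1 : |g x - g x₀| ≤ (L : ℝ) * dist x x₀ := by
          have := hg.dist_le_mul x x₀; rwa [Real.dist_eq] at this
        calc |g x| = |(g x - g x₀) + g x₀| := by ring_nf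
          _ ≤ |g x - g x₀| + |g x₀| := abs_add_le _ _
          _ ≤ (L : ℝ) * dist x x₀ + |g x₀| := by linarith
          _ ≤ (L : ℝ) * r + |g x₀| := by
              have := mul_le_mul_of_nonneg_left hxb L.coe_nonneg; linarith
          _ = M := by rw [hM]; ring
    refine ⟨max (L : ℝ) (2 * M), fun x y => ?_⟩
    rcases eq_or_ne x y with rfl | hxy
    · simp [Real.zero_rpow hη₀.ne']
    · have hd0 : 0 < dist x y := dist_pos.2 hxy
      have hdη : 0 ≤ dist x y ^ η := Real.rpow_nonneg dist_nonneg _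
      rcases le_or_gt (dist x y) 1 with hd1 | hd1
      · have h1 : dist x y ≤ dist x y ^ η := by
          calc dist x y = dist x y ^ (1 : ℝ) := (Real.rpow_one _).symm
            _ ≤ dist x y ^ η := Real.rpow_le_rpow_of_exponent_ge hd0 hd1 hη₁
        calc |g x - g y| ≤ (L : ℝ) * dist x y := by
              have := hg.dist_le_mul x y; rwa [Real.dist_eq] at this
          _ ≤ (L : ℝ) * dist x y ^ η := mul_le_mul_of_nonneg_left h1 L.coe_nonneg
          _ ≤ max (L : ℝ) (2 * M) * dist x y ^ η :=
              mul_le_mul_of_nonneg_right (le_max_left _ _) hdη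
      · have h1 : (1 : ℝ) ≤ dist x y ^ η := by
          calc (1 : ℝ) = 1 ^ η := (Real.one_rpow η).symm
            _ ≤ dist x y ^ η := Real.rpow_le_rpow zero_le_one hd1.le hη₀.le
        calc |g x - g y| ≤ |g x| + |g y| := abs_sub _ _
          _ ≤ M + M := add_le_add (hgb x) (hgb y)
          _ = 2 * M := by ring
          _ ≤ 2 * M * dist x y ^ η := le_mul_of_one_le_right (by positivity) h1
          _ ≤ max (L : ℝ) (2 * M) * dist x y ^ η :=
              mul_le_mul_of_nonneg_right (le_max_right _ _) hdη

variable [MeasurableSpace X] [BorelSpace X]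

/-- Approximation of the indicator of a finite-measure Borel set by a Lipschitz
function with bounded support, for measures finite on bounded sets. -/
lemma aux_indicator_approx (ν : Measure X)
    (hν : ∀ A : Set X, MeasurableSet A → IsBounded A → ν A < ⊤)
    {p : ℝ≥0∞} (hp0 : p ≠ 0) (hpt : p ≠ ∞)
    {s : Set X} (hs : MeasurableSet s) (hsν : ν s < ⊤)
    {ε : ℝ≥0∞} (hε : ε ≠ 0) :
    ∃ g : X → ℝ,
      eLpNorm (fun x => g x - s.indicator (fun _ => (1 : ℝ)) x) p ν ≤ ε ∧
      IsBounded {x | g x ≠ 0} ∧ ∃ L : ℝ≥0, LipschitzWith L g := by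
  have hptr : 0 < p.toReal := ENNReal.toReal_pos hp0 hpt
  set θ : ℝ≥0∞ := (min ε 1) ^ p.toReal with hθ
  have hmin0 : min ε 1 ≠ 0 := (lt_min (pos_iff_ne_zero.2 hε) zero_lt_one).ne'
  have hmint : min ε 1 ≠ ∞ := ne_top_of_le_ne_top ENNReal.one_ne_top (min_le_right _ _)
  have hθ0 : θ ≠ 0 := by
    intro h
    rcases ENNReal.rpow_eq_zero_iff.mp h with ⟨h', _⟩ | ⟨h', _⟩
    · exact hmin0 h'
    · exact hmint h'
  have hθ2 : θ / 2 ≠ 0 := by simp [ENNReal.div_eq_zero_iff, hθ0]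
  have hθ4 : θ / 4 ≠ 0 := by simp [ENNReal.div_eq_zero_iff, hθ0]
  have h24 : θ / 4 + θ / 4 = θ / 2 := by
    rw [ENNReal.div_add_div_same, ← two_mul]
    have h4 : (4 : ℝ≥0∞) = 2 * 2 := by norm_num
    rw [h4, ENNReal.mul_div_mul_left _ _ (by norm_num) (by norm_num)]
  have key : ∀ E : Set X, MeasurableSet E → ν E ≤ θ →
      eLpNorm (E.indicator fun _ => (1 : ℝ)) p ν ≤ ε := by
    intro E hE hEθ
    rw [eLpNorm_indicator_const hE hp0 hpt]
    have h1 : ((‖(1 : ℝ)‖ₑ : ℝ≥0∞)) = 1 := by simp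
    rw [h1, one_mul]
    calc ν E ^ (1 / p.toReal) ≤ θ ^ (1 / p.toReal) :=
          ENNReal.rpow_le_rpow hEθ (by positivity)
      _ = min ε 1 := by
          rw [hθ, ← ENNReal.rpow_mul, mul_one_div_cancel hptr.ne', ENNReal.rpow_one]
      _ ≤ ε := min_le_left _ _
  by_cases hsθ : ν s ≤ θ
  · -- small set: take g = 0
    refine ⟨0, ?_, ?_, 0, ?_⟩
    · have heq : (fun x => (0 : X → ℝ) x - s.indicator (fun _ => (1 : ℝ)) x) =
          -(s.indicator fun _ => (1 : ℝ)) := by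
        funext x; simp
      rw [heq, eLpNorm_neg]
      exact key s hs hsθ
    · have : {x : X | (0 : X → ℝ) x ≠ 0} = ∅ := by simp
      rw [this]; exact isBounded_empty
    · exact LipschitzWith.const' 0
  · -- main construction
    have hsne : s.Nonempty := by
      rcases s.eq_empty_or_nonempty with h | h
      · exact absurd (by simp [h] : ν s ≤ θ) hsθ
      · exact h
    obtain ⟨x₀, _⟩ := hsne
    -- step 1: cut to a big ball
    have htend : Tendsto (fun n : ℕ => ν (s \ closedBall x₀ n)) atTop (𝓝 0) := by
      have h1 : Tendsto (ν ∘ fun n : ℕ => s \ closedBall x₀ n) atTop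
          (𝓝 (ν (⋂ n : ℕ, s \ closedBall x₀ n))) := by
        apply tendsto_measure_iInter_atTop
        · exact fun n => (hs.diff measurableSet_closedBall).nullMeasurableSet
        · intro a b hab
          exact Set.diff_subset_diff_right
            (closedBall_subset_closedBall (by exact_mod_cast hab))
        · exact ⟨0, (lt_of_le_of_lt (measure_mono Set.diff_subset) hsν).ne⟩
      have h2 : (⋂ n : ℕ, s \ closedBall x₀ n) = ∅ := by
        ext x
        simp only [Set.mem_iInter, Set.mem_diff, Set.mem_empty_iff_false, iff_false, not_forall]
        obtain ⟨n, hn⟩ := exists_nat_ge (dist x x₀)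
        exact ⟨n, fun ⟨_, hx⟩ => hx (mem_closedBall.2 hn)⟩
      rw [h2, measure_empty] at h1
      exact h1
    obtain ⟨n, hn⟩ := (htend.eventually_lt_const (pos_iff_ne_zero.2 hθ4)).exists
    set s' : Set X := s ∩ closedBall x₀ n with hs'def
    have hs' : MeasurableSet s' := hs.inter measurableSet_closedBall
    -- step 2: inner approximation by a closed set
    set ρ : Measure X := ν.restrict (closedBall x₀ ((n : ℝ) + 1)) with hρ
    haveI : IsFiniteMeasure ρ := by
      constructor
      rw [hρ, Measure.restrict_apply_univ]
      exact hν _ measurableSet_closedBall isBounded_closedBall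
    obtain ⟨F, hFsub, hFc, hFρ⟩ := hs'.exists_isClosed_diff_lt (measure_ne_top ρ s') hθ4
    have hFmeas : MeasurableSet F := hFc.measurableSet
    have hs'ball : s' ⊆ closedBall x₀ ((n : ℝ) + 1) :=
      Set.inter_subset_right.trans (closedBall_subset_closedBall (by linarith))
    have hF4 : ν (s' \ F) < θ / 4 := by
      rwa [hρ, Measure.restrict_apply (hs'.diff hFmeas),
        Set.inter_eq_self_of_subset_left (Set.diff_subset.trans hs'ball)] at hFρ
    have hsplit : ν (s \ F) ≤ θ / 4 + θ / 4 := by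
      calc ν (s \ F) ≤ ν ((s \ closedBall x₀ n) ∪ (s' \ F)) := by
            apply measure_mono
            rintro x ⟨hxs, hxF⟩
            by_cases hx : x ∈ closedBall x₀ (n : ℝ)
            · exact Or.inr ⟨⟨hxs, hx⟩, hxF⟩
            · exact Or.inl ⟨hxs, hx⟩
        _ ≤ ν (s \ closedBall x₀ n) + ν (s' \ F) := measure_union_le _ _
        _ ≤ θ / 4 + θ / 4 := add_le_add hn.le hF4.le
    rcases F.eq_empty_or_nonempty with hFe | hFne
    · exfalso
      apply hsθ
      have : ν s ≤ θ / 4 + θ / 4 := by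
        have := hsplit; rwa [hFe, Set.diff_empty] at this
      calc ν s ≤ θ / 4 + θ / 4 := this
        _ = θ / 2 := h24
        _ ≤ θ := ENNReal.half_le_self
    · -- F nonempty closed bounded
      have hFs : F ⊆ s := hFsub.trans Set.inter_subset_left
      have hFν : ν F ≠ ∞ := ((measure_mono hFs).trans_lt hsν).ne
      have hthickball : thickening 1 F ⊆ closedBall x₀ ((n : ℝ) + 1) := by
        intro x hx
        obtain ⟨z, hzF, hdz⟩ := mem_thickening_iff.1 hx
        have hz : dist z x₀ ≤ (n : ℝ) := mem_closedBall.1 ((hFsub.trans Set.inter_subset_right) hzF)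
        have : dist x x₀ ≤ dist x z + dist z x₀ := dist_triangle _ _ _
        rw [mem_closedBall]; linarith
      have hthickfin : ν (thickening 1 F) ≠ ∞ :=
        (hν _ isOpen_thickening.measurableSet (isBounded_closedBall.subset hthickball)).ne
      have ht := tendsto_measure_thickening (μ := ν) (s := F) ⟨1, one_pos, hthickfin⟩
      rw [hFc.closure_eq] at ht
      have hlt : ν F < ν F + θ / 2 := ENNReal.lt_add_right hFν hθ2
      have hev := ht.eventually_lt_const hlt
      have hIoo : Set.Ioo (0 : ℝ) 1 ∈ 𝓝[>] (0 : ℝ) :=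
        Ioo_mem_nhdsGT_of_mem ⟨le_refl 0, one_pos⟩
      obtain ⟨δ, hδν, hδ0, hδ1⟩ := (hev.and (eventually_of_mem hIoo fun d hd => hd)).exists
      obtain ⟨hδ0, hδ1⟩ := (⟨hδ0, hδ1⟩ : 0 < δ ∧ δ < 1)
      have hthin : ν (thickening δ F \ F) < θ / 2 :=
        measure_diff_lt_of_lt_add hFmeas.nullMeasurableSet
          (self_subset_thickening hδ0 F) hFν hδν
      -- the Lipschitz bump
      set g : X → ℝ := fun x => max (1 - infDist x F / δ) 0 with hg
      have hg0 : ∀ x, 0 ≤ g x := fun x => le_max_right _ _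
      have hg1 : ∀ x, g x ≤ 1 := by
        intro x
        apply max_le _ zero_le_one
        exact sub_le_self 1 (div_nonneg infDist_nonneg hδ0.le)
      have hgF : ∀ x ∈ F, g x = 1 := by
        intro x hx
        rw [hg]; simp [infDist_zero_of_mem hx]
      have hgsupp : ∀ x, g x ≠ 0 → x ∈ thickening δ F := by
        intro x hx
        have h1 : 0 < 1 - infDist x F / δ := by
          by_contra h
          push_neg at h
          exact hx (max_eq_right h)
        have h2 : infDist x F < δ := (div_lt_one hδ0).1 (sub_pos.1 h1)
        exact (mem_thickening_iff_infDist_lt hFne).2 h2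
      have hlip : LipschitzWith ⟨δ⁻¹, by positivity⟩ g := by
        apply LipschitzWith.of_dist_le_mul
        intro x y
        rw [Real.dist_eq]
        have hinf : |infDist y F - infDist x F| ≤ dist x y := by
          have := (lipschitz_infDist_pt F).dist_le_mul y x
          rw [Real.dist_eq, NNReal.coe_one, one_mul, dist_comm y x] at this
          exact this
        calc |g x - g y| ≤ |(1 - infDist x F / δ) - (1 - infDist y F / δ)| :=
              abs_max_sub_max_le_abs _ _ _
          _ = |infDist y F - infDist x F| / δ := by
              have h : (1 - infDist x F / δ) - (1 - infDist y F / δ) =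
                  (infDist y F - infDist x F) / δ := by ring
              rw [h, abs_div, abs_of_pos hδ0]
          _ ≤ dist x y / δ := by gcongr
          _ = (⟨δ⁻¹, by positivity⟩ : ℝ≥0) * dist x y := by
              rw [div_eq_inv_mul]
      -- error set
      set E : Set X := (s \ F) ∪ (thickening δ F \ F) with hE
      have hEmeas : MeasurableSet E :=
        (hs.diff hFmeas).union (isOpen_thickening.measurableSet.diff hFmeas)
      have hEθ : ν E ≤ θ := by
        calc ν E ≤ ν (s \ F) + ν (thickening δ F \ F) := measure_union_le _ _
          _ ≤ (θ / 4 + θ / 4) + θ / 2 := add_le_add hsplit hthin.le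
          _ = θ := by rw [h24, ENNReal.add_halves]
      have hpw : ∀ x, ‖g x - s.indicator (fun _ => (1 : ℝ)) x‖ ≤
          ‖E.indicator (fun _ => (1 : ℝ)) x‖ := by
        intro x
        rw [Real.norm_eq_abs, Real.norm_eq_abs]
        have hEval : x ∈ E → |E.indicator (fun _ => (1 : ℝ)) x| = 1 := fun h => by
          rw [Set.indicator_of_mem h]; simp
        by_cases hxF : x ∈ F
        · rw [hgF x hxF, Set.indicator_of_mem (hFs hxF)]
          simpa using abs_nonneg _
        · by_cases hxs : x ∈ s
          · rw [Set.indicator_of_mem hxs, hEval (Or.inl ⟨hxs, hxF⟩)]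
            have h1 := hg0 x; have h2 := hg1 x
            rw [abs_le]; constructor <;> linarith
          · rw [Set.indicator_of_notMem hxs, sub_zero]
            by_cases hgx : g x = 0
            · rw [hgx]; simpa using abs_nonneg _
            · rw [hEval (Or.inr ⟨hgsupp x hgx, hxF⟩), abs_of_nonneg (hg0 x)]
              exact hg1 x
      refine ⟨g, ?_, ?_, ⟨δ⁻¹, by positivity⟩, hlip⟩
      · exact le_trans (eLpNorm_mono hpw) (key E hEmeas hEθ)
      · apply (isBounded_closedBall (x := x₀) (r := (n : ℝ) + 1)).subset
        intro x hx
        exact hthickball (thickening_mono hδ1.le F (hgsupp x hx))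

/-- Density of Lipschitz functions with bounded support in `ℒp` for Borel measures
finite on bounded sets. -/
lemma aux_lipschitz_dense (ν : Measure X)
    (hν : ∀ A : Set X, MeasurableSet A → IsBounded A → ν A < ⊤)
    {p : ℝ≥0∞} (hp0 : p ≠ 0) (hpt : p ≠ ∞)
    {f : X → ℝ} (hfm : StronglyMeasurable f) (hf : MemLp f p ν)
    {ε : ℝ≥0∞} (hε : ε ≠ 0) :
    ∃ g : X → ℝ, IsBounded {x | g x ≠ 0} ∧ (∃ L : ℝ≥0, LipschitzWith L g) ∧
      StronglyMeasurable (fun x => f x - g x) ∧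
      eLpNorm (fun x => f x - g x) p ν ≤ ε := by
  set P : (X → ℝ) → Prop :=
    fun g => IsBounded {x | g x ≠ 0} ∧ ∃ L : ℝ≥0, LipschitzWith L g with hP
  have h0P : ∀ (c : ℝ) ⦃s : Set X⦄, MeasurableSet s → ν s < ∞ →
      ∀ {ε' : ℝ≥0∞}, ε' ≠ 0 →
      ∃ g : X → ℝ, eLpNorm (g - s.indicator fun _ => c) p ν ≤ ε' ∧ P g := by
    intro c s hs hsν ε' hε'
    by_cases hc : c = 0
    · refine ⟨0, ?_, ?_, 0, LipschitzWith.const' 0⟩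
      · subst hc; simp
      · have : {x : X | (0 : X → ℝ) x ≠ 0} = ∅ := by simp
        rw [this]; exact isBounded_empty
    · have hcn : (‖c‖₊ : ℝ≥0∞) ≠ 0 := by
        simpa using hc
      have hεc : ε' / (‖c‖₊ : ℝ≥0∞) ≠ 0 := by
        simp [ENNReal.div_eq_zero_iff, hε']
      obtain ⟨g₁, herr, hb, L, hL⟩ := aux_indicator_approx ν hν hp0 hpt hs hsν hεc
      refine ⟨fun x => c * g₁ x, ?_, ?_, ‖c‖₊ * L, ?_⟩
      · have heq : ((fun x => c * g₁ x) - s.indicator fun _ => c) =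
            c • fun x => g₁ x - s.indicator (fun _ => (1 : ℝ)) x := by
          funext x
          by_cases hx : x ∈ s <;>
            simp [Pi.sub_apply, Pi.smul_apply, smul_eq_mul, hx, mul_sub]
        rw [heq, eLpNorm_const_smul]
        calc (‖c‖₊ : ℝ≥0∞) * eLpNorm (fun x => g₁ x - s.indicator (fun _ => (1 : ℝ)) x) p ν
            ≤ (‖c‖₊ : ℝ≥0∞) * (ε' / (‖c‖₊ : ℝ≥0∞)) := by gcongr
          _ = ε' := ENNReal.mul_div_cancel hcn ENNReal.coe_ne_top
      · apply hb.subset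
        intro x hx
        simp only [Set.mem_setOf_eq] at hx ⊢
        intro h; apply hx; rw [h, mul_zero]
      · have := (lipschitzWith_smul (β := ℝ) c).comp hL
        have heq : ((c • · : ℝ → ℝ) ∘ g₁) = fun x => c * g₁ x := by
          funext x; simp [smul_eq_mul]
        rwa [heq] at this
  have h1P : ∀ q r : X → ℝ, P q → P r → P (q + r) := by
    rintro q r ⟨hbq, Lq, hLq⟩ ⟨hbr, Lr, hLr⟩
    refine ⟨(hbq.union hbr).subset ?_, Lq + Lr, ?_⟩
    · intro x hx
      simp only [Set.mem_setOf_eq, Pi.add_apply, Set.mem_union] at hx ⊢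
      by_contra h
      push_neg at h
      exact hx (by rw [h.1, h.2, add_zero])
    · exact hLq.add hLr
  have h2P : ∀ q : X → ℝ, P q → AEStronglyMeasurable q ν := by
    rintro q ⟨_, L, hL⟩
    exact hL.continuous.aestronglyMeasurable
  obtain ⟨g, hgε, hgb, L, hgL⟩ := hf.induction_dense hpt P h0P h1P h2P hε
  exact ⟨g, hgb, ⟨L, hgL⟩, hfm.sub hgL.continuous.stronglyMeasurable, hgε⟩

end AuxLemmas

/-- Hölder version of the corrected conclusion of Proposition 4.5 of Aimar–Hartzstein
without the regularity hypothesis: every `f ∈ L^p(μ)` (`1 ≤ p < ∞`) admitting a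
Borel-measurable representative can be approximated in `L^p` by Hölder continuous
functions of exponent `η ∈ (0,1]` with bounded support. -/
theorem holder_boundedSupport_approx_of_borelRepresentative
    {X : Type*} [MetricSpace X] [m : MeasurableSpace X]
    (hm : borel X ≤ m)
    (μ : Measure X)
    (hμ : ∀ A : Set X, MeasurableSet A → IsBounded A → μ A < ⊤)
    (p : ℝ) (hp : 1 ≤ p)
    (η : ℝ) (hη₀ : 0 < η) (hη₁ : η ≤ 1)
    (f : X → ℝ) (hf : MemLp f (ENNReal.ofReal p) μ)
    (hfBorel : ∃ g₀ : X → ℝ, Measurable[borel X] g₀ ∧ f =ᵐ[μ] g₀)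
    (ε : ℝ) (hε : 0 < ε) :
    ∃ (g : X → ℝ) (C : ℝ),
      IsBounded {x | g x ≠ 0} ∧
      (∀ x y : X, |g x - g y| ≤ C * dist x y ^ η) ∧
      eLpNorm (fun x => f x - g x) (ENNReal.ofReal p) μ < ENNReal.ofReal ε := by
  obtain ⟨g₀, hg₀m, hfg⟩ := hfBorel
  set Q : ℝ≥0∞ := ENNReal.ofReal p with hQ
  have hQ0 : Q ≠ 0 := by
    rw [hQ, Ne, ENNReal.ofReal_eq_zero]
    linarith
  have hQt : Q ≠ ∞ := ENNReal.ofReal_ne_top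
  haveI hBorel : @BorelSpace X _ (borel X) := @BorelSpace.mk X _ (borel X) rfl
  set ν : @Measure X (borel X) := μ.trim hm with hν'
  have hν : ∀ A : Set X, MeasurableSet[borel X] A → IsBounded A → ν A < ⊤ := by
    intro A hA hAb
    rw [hν', trim_measurableSet_eq hm hA]
    exact hμ A (hm _ hA) hAb
  have sm₀ : StronglyMeasurable[borel X] g₀ := hg₀m.stronglyMeasurable
  have hg₀ℒ : MemLp g₀ Q ν := by
    refine ⟨sm₀.aestronglyMeasurable, ?_⟩
    rw [hν', eLpNorm_trim hm sm₀]
    exact (hf.ae_eq hfg).2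
  have hε2 : ENNReal.ofReal (ε / 2) ≠ 0 := by
    rw [Ne, ENNReal.ofReal_eq_zero]
    linarith
  obtain ⟨g, hgb, ⟨L, hgL⟩, hsm, herr⟩ :=
    @aux_lipschitz_dense X _ (borel X) hBorel ν hν Q hQ0 hQt g₀ sm₀ hg₀ℒ
      (ENNReal.ofReal (ε / 2)) hε2
  obtain ⟨C, hC⟩ := holder_of_lipschitz_boundedSupport hgL hgb hη₀ hη₁
  refine ⟨g, C, hgb, hC, ?_⟩
  have hae : (fun x => f x - g x) =ᵐ[μ] fun x => g₀ x - g x :=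
    hfg.mono fun x hx => by simp [hx]
  calc eLpNorm (fun x => f x - g x) Q μ
      = eLpNorm (fun x => g₀ x - g x) Q μ := eLpNorm_congr_ae hae
    _ = eLpNorm (fun x => g₀ x - g x) Q ν := (eLpNorm_trim hm hsm).symm
    _ ≤ ENNReal.ofReal (ε / 2) := herr
    _ < ENNReal.ofReal ε := by
        rw [ENNReal.ofReal_lt_ofReal_iff hε]
        linarith
end
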